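/- arXiv:1711.06364 — 2 statements merged into one kernel-verified Lean document; each statement's English description precedes it below -/
import Mathlib

section
/- Let r₁, r₂ > 0 with r₁ + r₂ = 1 and β > 0, and set 𝖲 = (√r₁−√r₂)² + 4r₁r₂β². If β ≤ (r₁r₂)^{-1/4}, then P attains its minimum over [0,1)×[0,1) at (a,b) = (0,0) and min P = r₁r₂β²/2. If β > (r₁r₂)^{-1/4}, then P attains its minimum over [0,1)×[0,1) at (a,b) = (1 − (√𝖲 − √r₁ + √r₂)/(2√r₁·r₂·β²), 1 − (√𝖲 + √r₁ − √r₂)/(2r₁·√r₂·β²)), and min P = ((√r₁+√r₂)√𝖲 − √(r₁r₂) − 1)/2 − ((r₁−r₂)/4)·log((√𝖲+√r₁−√r₂)/(√𝖲−√r₁+√r₂)) − (r₂/4)·log r₁ − (r₁/4)·log r₂ − (1/2)·log β. -/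
open Real

section AuxLemmas

private lemma logCL1 {x : ℝ} (hx : 0 < x) (h1 : x ≤ 1) : (x - 1/x)/2 ≤ Real.log x := by
  rcases eq_or_lt_of_le h1 with h | h
  · subst h; simp
  · have hu : 0 < -Real.log x := by
      have := Real.log_neg hx h
      linarith
    have hs := (Real.self_lt_sinh_iff).2 hu
    rw [Real.sinh_eq] at hs
    have h1' : Real.exp (-Real.log x) = x⁻¹ := by
      rw [Real.exp_neg, Real.exp_log hx]
    have h2' : Real.exp (-(-Real.log x)) = x := by
      rw [neg_neg, Real.exp_log hx]
    rw [h1', h2'] at hs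
    have : x⁻¹ = 1/x := by ring
    rw [this] at hs
    linarith

private lemma logCL2 {x : ℝ} (h1 : 1 ≤ x) : (x - 1) - (x-1)^2/2 ≤ Real.log x := by
  set F : ℝ → ℝ := fun y => Real.log y - ((y-1) - (y-1)^2/2) with hF
  have key : MonotoneOn F (Set.Ici 1) := by
    apply monotoneOn_of_deriv_nonneg (convex_Ici 1)
    · apply ContinuousOn.sub
      · exact Real.continuousOn_log.mono (by intro y hy; simp at hy ⊢; linarith)
      · fun_prop
    · intro y hy
      rw [interior_Ici] at hy
      have hy1 : (1:ℝ) < y := hy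
      apply DifferentiableAt.differentiableWithinAt
      apply DifferentiableAt.sub
      · exact Real.differentiableAt_log (by linarith)
      · fun_prop
    · intro y hy
      rw [interior_Ici] at hy
      have hy1 : (1:ℝ) < y := hy
      have hd : HasDerivAt F (y⁻¹ - (1 - (y-1))) y := by
        apply HasDerivAt.sub (Real.hasDerivAt_log (by linarith))
        have h1 : HasDerivAt (fun y : ℝ => y - 1) 1 y := (hasDerivAt_id y).sub_const 1
        have h2 : HasDerivAt (fun y : ℝ => (y-1)^2/2) (y-1) y := by
          have : HasDerivAt (fun y : ℝ => (y-1)^2/2) _ y := (h1.pow 2).div_const 2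
          convert this using 1
          ring
        exact h1.sub h2
      rw [hd.deriv]
      have hyp : (0:ℝ) < y := by linarith
      have heq : y⁻¹ - (1 - (y-1)) = (y-1)^2 / y := by
        field_simp; ring
      rw [heq]
      positivity
  have := key (Set.mem_Ici.2 (le_refl 1)) (Set.mem_Ici.2 h1) h1
  simp [hF] at this
  linarith

private lemma Dlow1 {u u₀ : ℝ} (hu : 0 < u) (hu₀1 : u₀ ≤ 1) (hle : u ≤ u₀) :
    (1/u₀ - 1/2) * ((u₀ - u)/u₀)^2
      ≤ 1/u - 1/u₀ + (Real.log u - Real.log u₀) + (1-u₀)*(u-u₀)/u₀^2 := by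
  have hu₀ : 0 < u₀ := lt_of_lt_of_le hu hle
  have hlog : Real.log u - Real.log u₀ = Real.log (u/u₀) := (Real.log_div hu.ne' hu₀.ne').symm
  have hcl := logCL1 (div_pos hu hu₀) ((div_le_one hu₀).2 hle)
  have hid : 1/u - 1/u₀ + (u/u₀ - 1/(u/u₀))/2 + (1-u₀)*(u-u₀)/u₀^2
      = (1/u₀ - 1/2) * ((u₀ - u)/u₀)^2 + (1/u₀ - 1/2)*(u₀-u)^3/(u*u₀^2) := by
    field_simp
    ring
  have hnn : 0 ≤ (1/u₀ - 1/2)*(u₀-u)^3/(u*u₀^2) := by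
    have h1 : (0:ℝ) ≤ 1/u₀ - 1/2 := by
      have : (1:ℝ) ≤ 1/u₀ := (le_div_iff₀ hu₀).2 (by linarith)
      linarith
    have h2 : (0:ℝ) ≤ (u₀ - u)^3 := pow_nonneg (by linarith) 3
    exact div_nonneg (mul_nonneg h1 h2) (by positivity)
  rw [hlog]
  linarith

private lemma Dlow2 {u u₀ : ℝ} (hu1 : u ≤ 1) (hu₀ : 0 < u₀) (hge : u₀ ≤ u) :
    (1/2) * ((u₀ - u)/u₀)^2
      ≤ 1/u - 1/u₀ + (Real.log u - Real.log u₀) + (1-u₀)*(u-u₀)/u₀^2 := by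
  have hu : 0 < u := lt_of_lt_of_le hu₀ hge
  have hlog : Real.log u - Real.log u₀ = Real.log (u/u₀) := (Real.log_div hu.ne' hu₀.ne').symm
  have hcl := logCL2 ((le_div_iff₀ hu₀).2 (by linarith) : 1 ≤ u/u₀)
  have hid : 1/u - 1/u₀ + ((u/u₀ - 1) - (u/u₀-1)^2/2) + (1-u₀)*(u-u₀)/u₀^2
      = (1/2) * ((u₀ - u)/u₀)^2 + ((u₀-u)/u₀)^2 * (1-u)/u := by
    field_simp
    ring
  have hnn : 0 ≤ ((u₀-u)/u₀)^2 * (1-u)/u := by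
    have : (0:ℝ) ≤ 1 - u := by linarith
    positivity
  rw [hlog]
  linarith

private lemma Dlow0 {u u₀ : ℝ} (hu : 0 < u) (hu₀1 : u₀ ≤ 1) (hu₀ : 0 < u₀) :
    0 ≤ 1/u - 1/u₀ + (Real.log u - Real.log u₀) + (1-u₀)*(u-u₀)/u₀^2 := by
  have hlog : Real.log u - Real.log u₀ = Real.log (u/u₀) := (Real.log_div hu.ne' hu₀.ne').symm
  have hcl : 1 - 1/(u/u₀) ≤ Real.log (u/u₀) := by
    have := Real.one_sub_inv_le_log_of_pos (div_pos hu hu₀)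
    rwa [one_div]
  have hid : 1/u - 1/u₀ + (1 - 1/(u/u₀)) + (1-u₀)*(u-u₀)/u₀^2
      = (1/u₀ - 1) * (u₀-u)^2/(u*u₀) := by
    field_simp
    ring
  have hnn : 0 ≤ (1/u₀ - 1) * (u₀-u)^2/(u*u₀) := by
    have h1 : (0:ℝ) ≤ 1/u₀ - 1 := by
      have : (1:ℝ) ≤ 1/u₀ := (le_div_iff₀ hu₀).2 (by linarith)
      linarith
    positivity
  rw [hlog]
  linarith

private lemma quadComb {r₁ r₂ q1 q2 c1 c2 A B : ℝ} (hq1 : q1^2 = r₁) (hq2 : q2^2 = r₂)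
    (h1 : 1/2 ≤ c1) (h2 : 1/2 ≤ c2) (hr₁ : 0 ≤ r₁) (hr₂ : 0 ≤ r₂) :
    q1*q2*(A*B) ≤ r₁*c1*A^2 + r₂*c2*B^2 := by
  nlinarith [sq_nonneg (q1*A - q2*B),
    mul_nonneg (mul_nonneg hr₁ (by linarith : (0:ℝ) ≤ c1 - 1/2)) (sq_nonneg A),
    mul_nonneg (mul_nonneg hr₂ (by linarith : (0:ℝ) ≤ c2 - 1/2)) (sq_nonneg B)]

private lemma keyIneq (r₁ r₂ γ q1 q2 u₀ v₀ u v : ℝ)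
    (hq1 : q1^2 = r₁) (hq2 : q2^2 = r₂) (hq1p : 0 < q1) (hq2p : 0 < q2) (hγ : 0 < γ)
    (hu₀ : 0 < u₀) (hu₀1 : u₀ ≤ 1) (hv₀ : 0 < v₀) (hv₀1 : v₀ ≤ 1)
    (hu : 0 < u) (hu1 : u ≤ 1) (hv : 0 < v) (hv1 : v ≤ 1)
    (hFOC1 : r₁ * (1 - u₀) / u₀^2 = γ * (1 - v₀))
    (hFOC2 : r₂ * (1 - v₀) / v₀^2 = γ * (1 - u₀))
    (hm : γ * (u₀ * v₀) ≤ q1 * q2) :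
    (r₁/2)*(1/u₀ - 1 + Real.log u₀) + (r₂/2)*(1/v₀ - 1 + Real.log v₀)
        + (γ/2)*(u₀+v₀-u₀*v₀)
      ≤ (r₁/2)*(1/u - 1 + Real.log u) + (r₂/2)*(1/v - 1 + Real.log v)
        + (γ/2)*(u+v-u*v) := by
  have hr₁ : 0 < r₁ := hq1 ▸ pow_pos hq1p 2
  have hr₂ : 0 < r₂ := hq2 ▸ pow_pos hq2p 2
  have hEq : (r₁/2)*(1/u - 1 + Real.log u) + (r₂/2)*(1/v - 1 + Real.log v)
        + (γ/2)*(u+v-u*v)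
      - ((r₁/2)*(1/u₀ - 1 + Real.log u₀) + (r₂/2)*(1/v₀ - 1 + Real.log v₀)
        + (γ/2)*(u₀+v₀-u₀*v₀))
      = (r₁/2)*(1/u - 1/u₀ + (Real.log u - Real.log u₀) + (1-u₀)*(u-u₀)/u₀^2)
        + (r₂/2)*(1/v - 1/v₀ + (Real.log v - Real.log v₀) + (1-v₀)*(v-v₀)/v₀^2)
        - (γ/2)*((u-u₀)*(v-v₀)) := by
    have hc1 : γ*(1-v₀)*(u-u₀) = r₁*((1-u₀)*(u-u₀)/u₀^2) := by
      rw [← hFOC1]; ring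
    have hc2 : γ*(1-u₀)*(v-v₀) = r₂*((1-v₀)*(v-v₀)/v₀^2) := by
      rw [← hFOC2]; ring
    linear_combination (1/2)*hc1 + (1/2)*hc2
  have hmain : (γ/2)*((u-u₀)*(v-v₀))
      ≤ (r₁/2)*(1/u - 1/u₀ + (Real.log u - Real.log u₀) + (1-u₀)*(u-u₀)/u₀^2)
        + (r₂/2)*(1/v - 1/v₀ + (Real.log v - Real.log v₀) + (1-v₀)*(v-v₀)/v₀^2) := by
    have hiu : (1:ℝ) ≤ 1/u₀ := (le_div_iff₀ hu₀).2 (by linarith)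
    have hiv : (1:ℝ) ≤ 1/v₀ := (le_div_iff₀ hv₀).2 (by linarith)
    rcases le_or_gt u u₀ with h1 | h1 <;> rcases le_or_gt v v₀ with h2 | h2
    · have hD1 := Dlow1 hu hu₀1 h1
      have hD2 := Dlow1 hv hv₀1 h2
      have hApos : 0 ≤ (u₀-u)/u₀ := div_nonneg (by linarith) hu₀.le
      have hBpos : 0 ≤ (v₀-v)/v₀ := div_nonneg (by linarith) hv₀.le
      have h14 := quadComb hq1 hq2 (by linarith : 1/2 ≤ 1/u₀ - 1/2)
        (by linarith : 1/2 ≤ 1/v₀ - 1/2) hr₁.le hr₂.le (A := (u₀-u)/u₀) (B := (v₀-v)/v₀)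
      have hg : γ*((u-u₀)*(v-v₀)) ≤ q1*q2*(((u₀-u)/u₀)*((v₀-v)/v₀)) := by
        have hAB : γ*((u-u₀)*(v-v₀)) = (γ*(u₀*v₀))*(((u₀-u)/u₀)*((v₀-v)/v₀)) := by
          field_simp; ring
        rw [hAB]
        exact mul_le_mul_of_nonneg_right hm (mul_nonneg hApos hBpos)
      have hb1 := mul_le_mul_of_nonneg_left hD1 (by linarith : (0:ℝ) ≤ r₁/2)
      have hb2 := mul_le_mul_of_nonneg_left hD2 (by linarith : (0:ℝ) ≤ r₂/2)
      linarith
    · have hD1 := Dlow0 hu hu₀1 hu₀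
      have hD2 := Dlow0 hv hv₀1 hv₀
      have hcross : (u-u₀)*(v-v₀) ≤ 0 :=
        mul_nonpos_of_nonpos_of_nonneg (by linarith) (by linarith)
      have hL : (γ/2)*((u-u₀)*(v-v₀)) ≤ 0 :=
        mul_nonpos_of_nonneg_of_nonpos (by positivity) hcross
      have hb1 := mul_le_mul_of_nonneg_left hD1 (by linarith : (0:ℝ) ≤ r₁/2)
      have hb2 := mul_le_mul_of_nonneg_left hD2 (by linarith : (0:ℝ) ≤ r₂/2)
      rw [mul_zero] at hb1 hb2
      linarith
    · have hD1 := Dlow0 hu hu₀1 hu₀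
      have hD2 := Dlow0 hv hv₀1 hv₀
      have hcross : (u-u₀)*(v-v₀) ≤ 0 :=
        mul_nonpos_of_nonneg_of_nonpos (by linarith) (by linarith)
      have hL : (γ/2)*((u-u₀)*(v-v₀)) ≤ 0 :=
        mul_nonpos_of_nonneg_of_nonpos (by positivity) hcross
      have hb1 := mul_le_mul_of_nonneg_left hD1 (by linarith : (0:ℝ) ≤ r₁/2)
      have hb2 := mul_le_mul_of_nonneg_left hD2 (by linarith : (0:ℝ) ≤ r₂/2)
      rw [mul_zero] at hb1 hb2
      linarith
    · have hD1 := Dlow2 hu1 hu₀ h1.le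
      have hD2 := Dlow2 hv1 hv₀ h2.le
      have hAneg : (u₀-u)/u₀ ≤ 0 :=
        div_nonpos_of_nonpos_of_nonneg (by linarith) hu₀.le
      have hBneg : (v₀-v)/v₀ ≤ 0 :=
        div_nonpos_of_nonpos_of_nonneg (by linarith) hv₀.le
      have hABpos : 0 ≤ ((u₀-u)/u₀)*((v₀-v)/v₀) := mul_nonneg_of_nonpos_of_nonpos hAneg hBneg
      have h14 := quadComb hq1 hq2 (by norm_num : (1:ℝ)/2 ≤ 1/2)
        (by norm_num : (1:ℝ)/2 ≤ 1/2) hr₁.le hr₂.le (A := (u₀-u)/u₀) (B := (v₀-v)/v₀)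
      have hg : γ*((u-u₀)*(v-v₀)) ≤ q1*q2*(((u₀-u)/u₀)*((v₀-v)/v₀)) := by
        have hAB : γ*((u-u₀)*(v-v₀)) = (γ*(u₀*v₀))*(((u₀-u)/u₀)*((v₀-v)/v₀)) := by
          field_simp; ring
        rw [hAB]
        exact mul_le_mul_of_nonneg_right hm hABpos
      have hb1 := mul_le_mul_of_nonneg_left hD1 (by linarith : (0:ℝ) ≤ r₁/2)
      have hb2 := mul_le_mul_of_nonneg_left hD2 (by linarith : (0:ℝ) ≤ r₂/2)
      linarith
  linarith

end AuxLemmas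

/-- For `r₁, r₂ > 0` with `r₁ + r₂ = 1` and `β > 0`, the function
`P(a,b) = (r₁/2)(a/(1−a) + log(1−a)) + (r₂/2)(b/(1−b) + log(1−b)) + (r₁r₂β²/2)(1−ab)`
on `[0,1) × [0,1)`. -/
noncomputable def ACfunc (r₁ r₂ β : ℝ) (p : ℝ × ℝ) : ℝ :=
  (r₁ / 2) * (p.1 / (1 - p.1) + Real.log (1 - p.1))
    + (r₂ / 2) * (p.2 / (1 - p.2) + Real.log (1 - p.2))
    + (r₁ * r₂ * β ^ 2 / 2) * (1 - p.1 * p.2)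

private lemma ACfunc_eq (r₁ r₂ β a b : ℝ) (ha : a < 1) (hb : b < 1) :
    ACfunc r₁ r₂ β (a, b)
      = (r₁/2)*(1/(1-a) - 1 + Real.log (1-a)) + (r₂/2)*(1/(1-b) - 1 + Real.log (1-b))
        + (r₁*r₂*β^2/2)*((1-a)+(1-b)-(1-a)*(1-b)) := by
  have h1 : (1:ℝ) - a ≠ 0 := by intro h; linarith [h]
  have h2 : (1:ℝ) - b ≠ 0 := by intro h; linarith [h]
  have e1 : a/(1-a) = 1/(1-a) - 1 := by field_simp; ring
  have e2 : b/(1-b) = 1/(1-b) - 1 := by field_simp; ring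
  unfold ACfunc
  simp only
  rw [e1, e2]
  ring

private lemma betaSmall {r₁ r₂ β : ℝ} (hr₁ : 0 < r₁) (hr₂ : 0 < r₂) (hβ : 0 < β)
    (h : β ≤ (r₁ * r₂) ^ (-(1:ℝ)/4)) :
    r₁ * r₂ * β^2 ≤ Real.sqrt r₁ * Real.sqrt r₂ := by
  have hc : 0 < r₁ * r₂ := mul_pos hr₁ hr₂
  have h2 : β^2 ≤ ((r₁*r₂) ^ (-(1:ℝ)/4))^2 := by
    apply pow_le_pow_left₀ hβ.le h
  have h3 : ((r₁*r₂) ^ (-(1:ℝ)/4))^2 = (r₁*r₂) ^ (-(1:ℝ)/2) := by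
    rw [← Real.rpow_natCast ((r₁*r₂) ^ (-(1:ℝ)/4)) 2, ← Real.rpow_mul hc.le]
    norm_num
  have h4 : (r₁*r₂) ^ (-(1:ℝ)/2) = (Real.sqrt (r₁*r₂))⁻¹ := by
    rw [show (-(1:ℝ)/2) = -(1/2) by norm_num, Real.rpow_neg hc.le, Real.sqrt_eq_rpow]
  have h5 : β^2 ≤ (Real.sqrt (r₁*r₂))⁻¹ := by rw [← h4, ← h3]; exact h2
  have hsp : 0 < Real.sqrt (r₁*r₂) := Real.sqrt_pos.2 hc
  have h6 : Real.sqrt (r₁*r₂) * β^2 ≤ 1 := by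
    calc Real.sqrt (r₁*r₂) * β^2 ≤ Real.sqrt (r₁*r₂) * (Real.sqrt (r₁*r₂))⁻¹ :=
          mul_le_mul_of_nonneg_left h5 hsp.le
    _ = 1 := mul_inv_cancel₀ hsp.ne'
  have hms : Real.sqrt (r₁*r₂) * Real.sqrt (r₁*r₂) = r₁*r₂ := Real.mul_self_sqrt hc.le
  have h7 := mul_le_mul_of_nonneg_left h6 hsp.le
  rw [mul_one] at h7
  calc r₁*r₂*β^2 = Real.sqrt (r₁*r₂) * (Real.sqrt (r₁*r₂) * β^2) := by
        rw [← mul_assoc, hms]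
  _ ≤ Real.sqrt (r₁*r₂) := h7
  _ = Real.sqrt r₁ * Real.sqrt r₂ := Real.sqrt_mul hr₁.le r₂

private lemma betaBig {r₁ r₂ β : ℝ} (hr₁ : 0 < r₁) (hr₂ : 0 < r₂) (hβ : 0 < β)
    (h : (r₁ * r₂) ^ (-(1:ℝ)/4) < β) :
    1 < Real.sqrt r₁ * Real.sqrt r₂ * β^2 := by
  have hc : 0 < r₁ * r₂ := mul_pos hr₁ hr₂
  have h2 : ((r₁*r₂) ^ (-(1:ℝ)/4))^2 < β^2 := by
    apply pow_lt_pow_left₀ h (Real.rpow_nonneg hc.le _)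
    norm_num
  have h3 : ((r₁*r₂) ^ (-(1:ℝ)/4))^2 = (r₁*r₂) ^ (-(1:ℝ)/2) := by
    rw [← Real.rpow_natCast ((r₁*r₂) ^ (-(1:ℝ)/4)) 2, ← Real.rpow_mul hc.le]
    norm_num
  have h4 : (r₁*r₂) ^ (-(1:ℝ)/2) = (Real.sqrt (r₁*r₂))⁻¹ := by
    rw [show (-(1:ℝ)/2) = -(1/2) by norm_num, Real.rpow_neg hc.le, Real.sqrt_eq_rpow]
  have h5 : (Real.sqrt (r₁*r₂))⁻¹ < β^2 := by rw [← h4, ← h3]; exact h2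
  have hsp : 0 < Real.sqrt (r₁*r₂) := Real.sqrt_pos.2 hc
  have h6 : 1 < Real.sqrt (r₁*r₂) * β^2 := by
    calc (1:ℝ) = Real.sqrt (r₁*r₂) * (Real.sqrt (r₁*r₂))⁻¹ := (mul_inv_cancel₀ hsp.ne').symm
    _ < Real.sqrt (r₁*r₂) * β^2 := by
        apply mul_lt_mul_of_pos_left h5 hsp
  rwa [Real.sqrt_mul hr₁.le r₂] at h6

set_option maxHeartbeats 2000000 in
theorem stmt_5 (r₁ r₂ β : ℝ) (hr₁ : 0 < r₁) (hr₂ : 0 < r₂) (hsum : r₁ + r₂ = 1)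
    (hβ : 0 < β) :
    (β ≤ (r₁ * r₂) ^ (-(1:ℝ)/4) →
      ((0,0) ∈ Set.Ico (0:ℝ) 1 ×ˢ Set.Ico (0:ℝ) 1 ∧
        (∀ p ∈ Set.Ico (0:ℝ) 1 ×ˢ Set.Ico (0:ℝ) 1, ACfunc r₁ r₂ β (0,0) ≤ ACfunc r₁ r₂ β p) ∧
        ACfunc r₁ r₂ β (0,0) = r₁ * r₂ * β ^ 2 / 2)) ∧
    (β > (r₁ * r₂) ^ (-(1:ℝ)/4) →
      (let S : ℝ := (Real.sqrt r₁ - Real.sqrt r₂) ^ 2 + 4 * r₁ * r₂ * β ^ 2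
       let p₀ : ℝ × ℝ :=
         (1 - (Real.sqrt S - Real.sqrt r₁ + Real.sqrt r₂) / (2 * Real.sqrt r₁ * r₂ * β ^ 2),
          1 - (Real.sqrt S + Real.sqrt r₁ - Real.sqrt r₂) / (2 * r₁ * Real.sqrt r₂ * β ^ 2))
       p₀ ∈ Set.Ico (0:ℝ) 1 ×ˢ Set.Ico (0:ℝ) 1 ∧
        (∀ p ∈ Set.Ico (0:ℝ) 1 ×ˢ Set.Ico (0:ℝ) 1, ACfunc r₁ r₂ β p₀ ≤ ACfunc r₁ r₂ β p) ∧
        ACfunc r₁ r₂ β p₀ =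
          ((Real.sqrt r₁ + Real.sqrt r₂) * Real.sqrt S - Real.sqrt (r₁ * r₂) - 1) / 2
            - ((r₁ - r₂) / 4) * Real.log ((Real.sqrt S + Real.sqrt r₁ - Real.sqrt r₂)
                / (Real.sqrt S - Real.sqrt r₁ + Real.sqrt r₂))
            - (r₂ / 4) * Real.log r₁ - (r₁ / 4) * Real.log r₂
            - (1 / 2) * Real.log β)) := by
  constructor
  · -- case β ≤ (r₁ r₂)^{-1/4}
    intro hble
    have hγ : 0 < r₁ * r₂ * β^2 := by positivity
    have hval : ACfunc r₁ r₂ β (0,0) = r₁ * r₂ * β^2 / 2 := by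
      unfold ACfunc; norm_num
    refine ⟨by constructor <;> simp, ?_, hval⟩
    intro p hp
    obtain ⟨hp1, hp2⟩ := hp
    simp only [Set.mem_Ico] at hp1 hp2
    have key := keyIneq r₁ r₂ (r₁*r₂*β^2) (Real.sqrt r₁) (Real.sqrt r₂) 1 1
      (1 - p.1) (1 - p.2)
      (Real.sq_sqrt hr₁.le) (Real.sq_sqrt hr₂.le) (Real.sqrt_pos.2 hr₁) (Real.sqrt_pos.2 hr₂)
      hγ one_pos le_rfl one_pos le_rfl (by linarith [hp1.2]) (by linarith [hp1.1])
      (by linarith [hp2.2]) (by linarith [hp2.1])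
      (by norm_num) (by norm_num)
      (by rw [mul_one, mul_one]; exact betaSmall hr₁ hr₂ hβ hble)
    have hpe : p = (p.1, p.2) := rfl
    rw [hpe, ACfunc_eq r₁ r₂ β p.1 p.2 hp1.2 hp2.2, hval]
    calc r₁ * r₂ * β^2/2
        = (r₁/2)*(1/1 - 1 + Real.log 1) + (r₂/2)*(1/1 - 1 + Real.log 1)
          + (r₁*r₂*β^2/2)*(1+1-1*1) := by norm_num
    _ ≤ (r₁/2)*(1/(1-p.1) - 1 + Real.log (1-p.1)) + (r₂/2)*(1/(1-p.2) - 1 + Real.log (1-p.2))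
          + (r₁*r₂*β^2/2)*((1-p.1)+(1-p.2)-(1-p.1)*(1-p.2)) := key
  · -- case β > (r₁ r₂)^{-1/4}
    intro hbgt
    dsimp only
    have hm1 := betaBig hr₁ hr₂ hβ hbgt
    set q1 := Real.sqrt r₁ with hq1d
    set q2 := Real.sqrt r₂ with hq2d
    have hq1 : q1^2 = r₁ := Real.sq_sqrt hr₁.le
    have hq2 : q2^2 = r₂ := Real.sq_sqrt hr₂.le
    have hq1p : 0 < q1 := Real.sqrt_pos.2 hr₁
    have hq2p : 0 < q2 := Real.sqrt_pos.2 hr₂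
    set σ := Real.sqrt ((q1 - q2) ^ 2 + 4 * r₁ * r₂ * β ^ 2) with hσd
    have hσ2 : σ^2 = (q1-q2)^2 + 4*r₁*r₂*β^2 := Real.sq_sqrt (by positivity)
    have hσ0 : 0 ≤ σ := Real.sqrt_nonneg _
    have hγ : 0 < r₁ * r₂ * β^2 := by positivity
    have hσ2' : σ^2 = (q1-q2)^2 + 4*q1^2*q2^2*β^2 := by
      rw [hσ2]; linear_combination (-4*β^2*r₂)*hq1 + (-4*β^2*q1^2)*hq2
    have hσgt : q1 + q2 < σ := by
      have hsq : (q1+q2)^2 < σ^2 := by nlinarith [mul_pos hq1p hq2p]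
      exact lt_of_pow_lt_pow_left₀ 2 hσ0 hsq
    set X₀ := (σ + q1 - q2)/(2*q1) with hX₀def
    set Y₀ := (σ + q2 - q1)/(2*q2) with hY₀def
    have hX₀1 : 1 < X₀ := by
      rw [hX₀def, lt_div_iff₀ (by positivity)]; linarith
    have hY₀1 : 1 < Y₀ := by
      rw [hY₀def, lt_div_iff₀ (by positivity)]; linarith
    have hX₀p : 0 < X₀ := by linarith
    have hY₀p : 0 < Y₀ := by linarith
    have e : X₀*(2*q1) = σ + q1 - q2 := by
      rw [hX₀def]; field_simp
    have e2 : Y₀*(2*q2) = σ + q2 - q1 := by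
      rw [hY₀def]; field_simp
    have hXY : X₀ * Y₀ = q1*q2*β^2 := by
      rw [hX₀def, hY₀def, div_mul_div_comm, div_eq_iff (by positivity)]
      linear_combination hσ2'
    clear_value q1 q2 σ X₀ Y₀
    have hXquad : r₁*X₀^2 - r₁*X₀ + q1*q2*X₀ = r₁*r₂*β^2 := by
      linear_combination (1/4)*hσ2' + ((σ - q1 + q2 + 2*q1*X₀)/4)*e
        - (X₀^2 - X₀ - r₂*β^2)*hq1 + (q1^2*β^2)*hq2
    have hYquad : r₂*Y₀^2 - r₂*Y₀ + q1*q2*Y₀ = r₁*r₂*β^2 := by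
      linear_combination (1/4)*hσ2' + ((σ - q2 + q1 + 2*q2*Y₀)/4)*e2
        - (Y₀^2 - Y₀ - r₁*β^2)*hq2 + (q2^2*β^2)*hq1
    have hp1eq : (σ - q1 + q2)/(2*q1*r₂*β^2) = 1/X₀ := by
      rw [div_eq_div_iff (by positivity) hX₀p.ne']
      linear_combination 2*q1*β^2*hq2 + 2*q2*hXY - X₀*e2
    have hp2eq : (σ + q1 - q2)/(2*r₁*q2*β^2) = 1/Y₀ := by
      rw [div_eq_div_iff (by positivity) hY₀p.ne']
      linear_combination 2*q2*β^2*hq1 + 2*q1*hXY - Y₀*e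
    have hgX : (r₁*r₂*β^2)*(1/X₀) = q1*q2*Y₀ := by
      rw [mul_one_div, div_eq_iff hX₀p.ne']
      linear_combination -β^2*r₂*hq1 - β^2*q1^2*hq2 - q1*q2*hXY
    have hgY : (r₁*r₂*β^2)*(1/Y₀) = q1*q2*X₀ := by
      rw [mul_one_div, div_eq_iff hY₀p.ne']
      linear_combination -β^2*r₂*hq1 - β^2*q1^2*hq2 - q1*q2*hXY
    have hgXY : (r₁*r₂*β^2)*((1/X₀)*(1/Y₀)) = q1*q2 := by
      rw [div_mul_div_comm, one_mul, mul_one_div, div_eq_iff (by positivity)]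
      linear_combination -β^2*r₂*hq1 - β^2*q1^2*hq2 - q1*q2*hXY
    have hFOC1 : r₁ * (1 - 1/X₀) / (1/X₀)^2 = (r₁*r₂*β^2) * (1 - 1/Y₀) := by
      have l1 : r₁ * (1 - 1/X₀) / (1/X₀)^2 = r₁*X₀^2 - r₁*X₀ := by
        field_simp
      rw [l1, mul_sub, mul_one, hgY]
      linear_combination hXquad
    have hFOC2 : r₂ * (1 - 1/Y₀) / (1/Y₀)^2 = (r₁*r₂*β^2) * (1 - 1/X₀) := by
      have l1 : r₂ * (1 - 1/Y₀) / (1/Y₀)^2 = r₂*Y₀^2 - r₂*Y₀ := by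
        field_simp
      rw [l1, mul_sub, mul_one, hgX]
      linear_combination hYquad
    have hpoly : (r₁/2)*(X₀-1) + (r₂/2)*(Y₀-1)
        + (r₁*r₂*β^2/2)*(1/X₀ + 1/Y₀ - (1/X₀)*(1/Y₀))
        = ((q1+q2)*σ - q1*q2 - 1)/2 := by
      linear_combination (1/2)*hgX + (1/2)*hgY - (1/2)*hgXY + ((q1+q2)/4)*e
        + ((q1+q2)/4)*e2 - (X₀/2)*hq1 - (Y₀/2)*hq2 - (1/2)*hsum
    have hlq1 : Real.log r₁ = 2*Real.log q1 := by
      rw [← hq1, Real.log_pow]; push_cast; ring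
    have hlq2 : Real.log r₂ = 2*Real.log q2 := by
      rw [← hq2, Real.log_pow]; push_cast; ring
    have e2' : Y₀*(2*q2) = σ - q1 + q2 := by rw [e2]; ring
    have hLR : Real.log ((σ+q1-q2)/(σ-q1+q2))
        = Real.log r₁/2 + Real.log X₀ - (Real.log r₂/2 + Real.log Y₀) := by
      rw [← e, ← e2', Real.log_div (by positivity) (by positivity),
        Real.log_mul hX₀p.ne' (by positivity), Real.log_mul hY₀p.ne' (by positivity),
        Real.log_mul (by norm_num) hq1p.ne', Real.log_mul (by norm_num) hq2p.ne',
        hlq1, hlq2]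
      ring
    have hsumlog : Real.log X₀ + Real.log Y₀
        = Real.log r₁/2 + Real.log r₂/2 + 2*Real.log β := by
      rw [← Real.log_mul hX₀p.ne' hY₀p.ne', hXY,
        Real.log_mul (by positivity) (by positivity),
        Real.log_mul hq1p.ne' hq2p.ne', Real.log_pow, hlq1, hlq2]
      push_cast; ring
    have hfinal : (r₁/2)*(X₀ - 1) + (r₂/2)*(Y₀-1)
        + (r₁*r₂*β^2/2)*(1/X₀ + 1/Y₀ - (1/X₀)*(1/Y₀))
        - (r₁/2)*Real.log X₀ - (r₂/2)*Real.log Y₀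
        = ((q1+q2)*σ - q1*q2 - 1)/2
          - ((r₁-r₂)/4)*Real.log ((σ+q1-q2)/(σ-q1+q2))
          - (r₂/4)*Real.log r₁ - (r₁/4)*Real.log r₂ - (1/2)*Real.log β := by
      linear_combination hpoly + ((r₁-r₂)/4)*hLR - ((r₁+r₂)/4)*hsumlog
        - (Real.log β/2)*hsum
    -- bounds for u₀ = 1/X₀, v₀ = 1/Y₀
    have hu₀p : 0 < 1/X₀ := by positivity
    have hu₀1 : 1/X₀ ≤ 1 := by rw [div_le_one hX₀p]; linarith
    have hv₀p : 0 < 1/Y₀ := by positivity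
    have hv₀1 : 1/Y₀ ≤ 1 := by rw [div_le_one hY₀p]; linarith
    -- now rewrite the goal
    rw [hp1eq, hp2eq]
    have hACp₀ : ACfunc r₁ r₂ β (1 - 1/X₀, 1 - 1/Y₀)
        = (r₁/2)*(X₀ - 1 + Real.log (1/X₀)) + (r₂/2)*(Y₀ - 1 + Real.log (1/Y₀))
          + (r₁*r₂*β^2/2)*(1/X₀ + 1/Y₀ - (1/X₀)*(1/Y₀)) := by
      rw [ACfunc_eq r₁ r₂ β _ _ (by linarith : (1:ℝ) - 1/X₀ < 1) (by linarith : (1:ℝ) - 1/Y₀ < 1)]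
      have s1 : (1:ℝ) - (1 - 1/X₀) = 1/X₀ := by ring
      have s2 : (1:ℝ) - (1 - 1/Y₀) = 1/Y₀ := by ring
      rw [s1, s2]
      have s3 : 1/(1/X₀) = X₀ := one_div_one_div X₀
      have s4 : 1/(1/Y₀) = Y₀ := one_div_one_div Y₀
      rw [s3, s4]
    refine ⟨⟨?_, ?_⟩, ?_, ?_⟩
    · simp only [Set.mem_Ico]
      constructor
      · linarith
      · linarith
    · simp only [Set.mem_Ico]
      constructor
      · linarith
      · linarith
    · -- minimality
      intro p hp
      obtain ⟨hp1, hp2⟩ := hp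
      simp only [Set.mem_Ico] at hp1 hp2
      have key := keyIneq r₁ r₂ (r₁*r₂*β^2) q1 q2 (1/X₀) (1/Y₀)
        (1 - p.1) (1 - p.2) hq1 hq2 hq1p hq2p hγ
        hu₀p hu₀1 hv₀p hv₀1
        (by linarith [hp1.2]) (by linarith [hp1.1])
        (by linarith [hp2.2]) (by linarith [hp2.1])
        hFOC1 hFOC2 (le_of_eq hgXY)
      have hpe : p = (p.1, p.2) := rfl
      rw [hpe, ACfunc_eq r₁ r₂ β p.1 p.2 hp1.2 hp2.2, hACp₀]
      have hu0eq : 1/(1/X₀) = X₀ := one_div_one_div X₀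
      have hv0eq : 1/(1/Y₀) = Y₀ := one_div_one_div Y₀
      rw [hu0eq, hv0eq] at key
      calc (r₁/2)*(X₀ - 1 + Real.log (1/X₀)) + (r₂/2)*(Y₀ - 1 + Real.log (1/Y₀))
          + (r₁*r₂*β^2/2)*(1/X₀ + 1/Y₀ - (1/X₀)*(1/Y₀))
          = (r₁/2)*(X₀ - 1 + Real.log (1/X₀)) + (r₂/2)*(Y₀ - 1 + Real.log (1/Y₀))
          + (r₁*r₂*β^2/2)*(1/X₀ + 1/Y₀ - 1/X₀*(1/Y₀)) := by ring
      _ ≤ (r₁/2)*(1/(1-p.1) - 1 + Real.log (1-p.1)) + (r₂/2)*(1/(1-p.2) - 1 + Real.log (1-p.2))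
          + (r₁*r₂*β^2/2)*((1-p.1)+(1-p.2)-(1-p.1)*(1-p.2)) := by
        exact key
    · -- value
      rw [hACp₀]
      have hlx : Real.log (1/X₀) = -Real.log X₀ := by rw [one_div, Real.log_inv]
      have hly : Real.log (1/Y₀) = -Real.log Y₀ := by rw [one_div, Real.log_inv]
      have hqq : Real.sqrt (r₁ * r₂) = q1 * q2 := by
        rw [hq1d, hq2d]; exact Real.sqrt_mul hr₁.le r₂
      rw [hlx, hly, hqq]
      linear_combination hfinal
end

section
/- Let n be a positive integer, let μ₁ ≥ μ₂ ≥ ⋯ ≥ μ_n ≥ 0 be real numbers, and let α ≥ 0 and B > 0 be reals. Then the equation (1/n)·Σ_{i=1}^{n} 1/(γ − μ_i) = B²/(α + √(α² + γB²)) has exactly one solution γ in the interval (μ₁, ∞). -/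
private noncomputable def fF (n : ℕ) (μ : ℕ → ℝ) (γ : ℝ) : ℝ :=
  (1 / (n : ℝ)) * ∑ i ∈ Finset.Icc 1 n, γ / (γ - μ i)

private noncomputable def rF (α B γ : ℝ) : ℝ :=
  Real.sqrt (α ^ 2 + γ * B ^ 2) - α

/-- The equation `(1/n)·Σ_{i=1}^{n} 1/(γ − μ_i) = B²/(α + √(α² + γB²))` has exactly one
solution `γ` in the interval `(μ₁, ∞)`, where `μ₁ ≥ μ₂ ≥ ⋯ ≥ μ_n ≥ 0`, `α ≥ 0`, `B > 0`. -/
theorem stmt_6 (n : ℕ) (hn : 1 ≤ n) (μ : ℕ → ℝ)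
    (hord : ∀ i ∈ Finset.Icc 1 n, ∀ j ∈ Finset.Icc 1 n, i ≤ j → μ j ≤ μ i)
    (hnonneg : ∀ i ∈ Finset.Icc 1 n, 0 ≤ μ i)
    (α B : ℝ) (hα : 0 ≤ α) (hB : 0 < B) :
    ∃! γ : ℝ, γ ∈ Set.Ioi (μ 1) ∧
      (1 / (n : ℝ)) * ∑ i ∈ Finset.Icc 1 n, 1 / (γ - μ i)
        = B ^ 2 / (α + Real.sqrt (α ^ 2 + γ * B ^ 2)) := by
  have h1mem : 1 ∈ Finset.Icc 1 n := by simp [hn]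
  set a := μ 1 with ha
  have ha0 : 0 ≤ a := hnonneg 1 h1mem
  have hμle : ∀ i ∈ Finset.Icc 1 n, μ i ≤ a := fun i hi =>
    hord 1 h1mem i hi (Finset.mem_Icc.mp hi).1
  have hnR : (0:ℝ) < n := by exact_mod_cast Nat.lt_of_lt_of_le Nat.zero_lt_one hn
  have hcard : (Finset.Icc 1 n).card = n := by rw [Nat.card_Icc]; omega
  have hden : ∀ x : ℝ, a < x → ∀ i ∈ Finset.Icc 1 n, 0 < x - μ i := by
    intro x hx i hi
    have := hμle i hi; linarith
  -- monotonicity of rF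
  have hr_mono : ∀ x y : ℝ, x ≤ y → rF α B x ≤ rF α B y := by
    intro x y hxy
    have h : α ^ 2 + x * B ^ 2 ≤ α ^ 2 + y * B ^ 2 := by nlinarith [sq_nonneg B]
    exact sub_le_sub_right (Real.sqrt_le_sqrt h) α
  have hr_strict : ∀ x y : ℝ, 0 ≤ x → x < y → rF α B x < rF α B y := by
    intro x y hx hxy
    have h1 : 0 ≤ α ^ 2 + x * B ^ 2 := by positivity
    have h2 : α ^ 2 + x * B ^ 2 < α ^ 2 + y * B ^ 2 := by nlinarith [pow_pos hB 2]
    exact sub_lt_sub_right (Real.sqrt_lt_sqrt h1 h2) α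
  have hr_nonneg : ∀ x : ℝ, 0 ≤ x → 0 ≤ rF α B x := by
    intro x hx
    unfold rF
    have h1 : α ^ 2 ≤ α ^ 2 + x * B ^ 2 := by nlinarith [sq_nonneg B]
    have h2 : α = Real.sqrt (α ^ 2) := (Real.sqrt_sq hα).symm
    have := Real.sqrt_le_sqrt h1
    linarith [h2 ▸ this]
  -- lower bound for fF
  have hf_lb1 : ∀ x : ℝ, a < x → 1 ≤ fF n μ x := by
    intro x hx
    have hterm : ∀ i ∈ Finset.Icc 1 n, (1:ℝ) ≤ x / (x - μ i) := by
      intro i hi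
      have h1 := hden x hx i hi
      have h2 := hnonneg i hi
      rw [le_div_iff₀ h1]; linarith
    have hsum : (n:ℝ) ≤ ∑ i ∈ Finset.Icc 1 n, x / (x - μ i) := by
      calc (n:ℝ) = ∑ _i ∈ Finset.Icc 1 n, (1:ℝ) := by simp [hcard]
        _ ≤ _ := Finset.sum_le_sum hterm
    have h3 := mul_le_mul_of_nonneg_left hsum (le_of_lt (one_div_pos.mpr hnR))
    unfold fF
    calc (1:ℝ) = (1/(n:ℝ)) * n := by field_simp
      _ ≤ _ := h3
  -- antitonicity of fF
  have hf_anti : ∀ x y : ℝ, a < x → x ≤ y → fF n μ y ≤ fF n μ x := by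
    intro x y hx hxy
    unfold fF
    apply mul_le_mul_of_nonneg_left _ (by positivity)
    apply Finset.sum_le_sum
    intro i hi
    have h1 := hden x hx i hi
    have h2 : 0 < y - μ i := by linarith
    have h3 := hnonneg i hi
    rw [div_le_div_iff₀ h2 h1]
    nlinarith [mul_nonneg (sub_nonneg.mpr hxy) h3]
  -- key equivalence
  have key : ∀ γ : ℝ, a < γ →
      (((1 / (n : ℝ)) * ∑ i ∈ Finset.Icc 1 n, 1 / (γ - μ i)
        = B ^ 2 / (α + Real.sqrt (α ^ 2 + γ * B ^ 2))) ↔ fF n μ γ = rF α B γ) := by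
    intro γ hγ
    have hγ0 : 0 < γ := lt_of_le_of_lt ha0 hγ
    have hq : 0 < α ^ 2 + γ * B ^ 2 := by positivity
    have hsp : 0 < Real.sqrt (α ^ 2 + γ * B ^ 2) := Real.sqrt_pos.mpr hq
    have hsq : Real.sqrt (α ^ 2 + γ * B ^ 2) ^ 2 = α ^ 2 + γ * B ^ 2 := Real.sq_sqrt hq.le
    have hds : 0 < α + Real.sqrt (α ^ 2 + γ * B ^ 2) := by linarith
    have hrhs : B ^ 2 / (α + Real.sqrt (α ^ 2 + γ * B ^ 2))
        = (Real.sqrt (α ^ 2 + γ * B ^ 2) - α) / γ := by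
      rw [div_eq_div_iff hds.ne' hγ0.ne']
      nlinarith [hsq]
    have hfe : fF n μ γ = ((1 / (n:ℝ)) * ∑ i ∈ Finset.Icc 1 n, 1 / (γ - μ i)) * γ := by
      unfold fF
      rw [mul_assoc, Finset.sum_mul]
      congr 1
      exact Finset.sum_congr rfl fun i _ => (one_div_mul_eq_div _ _).symm
    rw [hrhs, eq_div_iff hγ0.ne', ← hfe]
    unfold rF
    rfl
  -- continuity
  have hg_cont : ∀ x₀ : ℝ, a < x₀ →
      ContinuousOn (fun x => fF n μ x - rF α B x) (Set.Ici x₀) := by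
    intro x₀ hx₀
    apply ContinuousOn.sub
    · unfold fF
      apply ContinuousOn.mul continuousOn_const
      apply continuousOn_finset_sum
      intro i _hi
      apply ContinuousOn.div continuousOn_id ((continuous_id.sub continuous_const).continuousOn)
      intro x hx
      exact ne_of_gt (hden x (lt_of_lt_of_le hx₀ hx) i _hi)
    · unfold rF
      exact Continuous.continuousOn (by fun_prop)
  -- existence of a point where fF > rF
  have hex : ∃ x : ℝ, a < x ∧ rF α B x < fF n μ x := by
    rcases eq_or_lt_of_le ha0 with h0 | h0
    · set x := min 1 ((2*α+1)/(2*B^2)) with hx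
      have hxpos : (0:ℝ) < x := lt_min one_pos (by positivity)
      refine ⟨x, by rw [← h0]; exact hxpos, ?_⟩
      have hax : a < x := by rw [← h0]; exact hxpos
      have h1 : rF α B x < 1 := by
        unfold rF
        have hle : x ≤ (2*α+1)/(2*B^2) := min_le_right _ _
        have hB2 : (0:ℝ) < B^2 := by positivity
        have h2 : x * B^2 ≤ (2*α+1)/2 := by
          calc x * B^2 ≤ ((2*α+1)/(2*B^2)) * B^2 := by nlinarith
            _ = (2*α+1)/2 := by field_simp
        have h3 : α^2 + x*B^2 < (α+1)^2 := by nlinarith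
        have h4 : Real.sqrt (α^2 + x*B^2) < α + 1 :=
          (Real.sqrt_lt' (by linarith)).mpr h3
        linarith
      exact lt_of_lt_of_le h1 (hf_lb1 x hax)
    · set R := rF α B (a+1) + 1 with hR
      have hR0 : 0 < R := by
        have := hr_nonneg (a+1) (by linarith)
        linarith
      set ε := min 1 (a/(n*R)) with hε
      have hε0 : 0 < ε := lt_min one_pos (by positivity)
      refine ⟨a + ε, by linarith, ?_⟩
      have hεle : ε ≤ a/(n*R) := min_le_right _ _
      have hε1 : ε ≤ 1 := min_le_left _ _
      have h1 : rF α B (a+ε) ≤ R - 1 := by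
        have := hr_mono (a+ε) (a+1) (by linarith)
        linarith
      have h2 : R ≤ fF n μ (a+ε) := by
        have hterm_nonneg : ∀ i ∈ Finset.Icc 1 n, (0:ℝ) ≤ (a+ε)/((a+ε) - μ i) := by
          intro i hi
          exact le_of_lt (div_pos (by linarith) (hden (a+ε) (by linarith) i hi))
        have hsum_ge : (a+ε)/((a+ε) - a) ≤ ∑ i ∈ Finset.Icc 1 n, (a+ε)/((a+ε) - μ i) := by
          have := Finset.single_le_sum hterm_nonneg h1mem
          rw [← ha] at this
          exact this
        have haε : (a+ε) - a = ε := by ring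
        rw [haε] at hsum_ge
        have hdiv : (n:ℝ)*R ≤ (a+ε)/ε := by
          rw [le_div_iff₀ hε0]
          have hnr : (0:ℝ) < n*R := by positivity
          have he : (n:ℝ)*R*(a/(n*R)) = a := by field_simp
          have h7 : (n:ℝ)*R*ε ≤ a := by
            calc (n:ℝ)*R*ε ≤ (n:ℝ)*R*(a/(n*R)) := by
                  exact mul_le_mul_of_nonneg_left hεle hnr.le
              _ = a := he
          linarith
        have h4 : (1/(n:ℝ)) * ((n:ℝ)*R) ≤ (1/(n:ℝ)) * ((a+ε)/ε) :=
          mul_le_mul_of_nonneg_left hdiv (by positivity)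
        have h5 : (1/(n:ℝ)) * ((a+ε)/ε) ≤ fF n μ (a+ε) := by
          unfold fF
          exact mul_le_mul_of_nonneg_left hsum_ge (by positivity)
        have h6 : (1/(n:ℝ)) * ((n:ℝ)*R) = R := by field_simp
        linarith
      linarith
  -- existence of a point where fF < rF
  have hey : ∀ x : ℝ, ∃ y : ℝ, x < y ∧ a < y ∧ fF n μ y < rF α B y := by
    intro x
    set y := max (x+1) (max (2*a+1) (((α+3)/B)^2 + 1)) with hy
    have hy1 : x < y := lt_of_lt_of_le (by linarith) (le_max_left _ _)
    have hy2 : 2*a+1 ≤ y := le_trans (le_max_left _ _) (le_max_right _ _)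
    have hy3 : ((α+3)/B)^2 + 1 ≤ y := le_trans (le_max_right _ _) (le_max_right _ _)
    have hya : a < y := by linarith
    refine ⟨y, hy1, hya, ?_⟩
    have hypos : 0 < y := lt_of_le_of_lt ha0 hya
    have hfub : fF n μ y ≤ y/(y-a) := by
      unfold fF
      have hterm : ∀ i ∈ Finset.Icc 1 n, y/(y-μ i) ≤ y/(y-a) := by
        intro i hi
        have h1 := hden y hya i hi
        have h2 : 0 < y - a := by linarith
        have h3 := hμle i hi
        rw [div_le_div_iff₀ h1 h2]
        nlinarith
      have hsum : ∑ i ∈ Finset.Icc 1 n, y/(y-μ i) ≤ (n:ℝ) * (y/(y-a)) := by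
        calc ∑ i ∈ Finset.Icc 1 n, y/(y-μ i) ≤ ∑ _i ∈ Finset.Icc 1 n, y/(y-a) :=
              Finset.sum_le_sum hterm
          _ = (n:ℝ) * (y/(y-a)) := by simp [hcard]
      calc (1/(n:ℝ)) * ∑ i ∈ Finset.Icc 1 n, y/(y-μ i)
          ≤ (1/(n:ℝ)) * ((n:ℝ) * (y/(y-a))) := mul_le_mul_of_nonneg_left hsum (by positivity)
        _ = y/(y-a) := by field_simp
    have h2 : y/(y-a) ≤ 2 := by
      rw [div_le_iff₀ (by linarith)]
      linarith
    have h3 : 3 ≤ rF α B y := by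
      unfold rF
      have hyB : (α+3)^2 ≤ y*B^2 := by
        have he : ((α+3)/B)^2 * B^2 = (α+3)^2 := by field_simp
        nlinarith [sq_nonneg B, pow_pos hB 2]
      have hss : α + 3 ≤ Real.sqrt (α^2 + y*B^2) :=
        Real.le_sqrt_of_sq_le (by linarith [hyB, sq_nonneg α])
      linarith
    linarith
  -- put together via IVT
  obtain ⟨x₀, hx₀a, hx₀⟩ := hex
  obtain ⟨y₀, hxy, hy₀a, hy₀⟩ := hey x₀
  have hcont : ContinuousOn (fun x => fF n μ x - rF α B x) (Set.Icc x₀ y₀) :=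
    (hg_cont x₀ hx₀a).mono Set.Icc_subset_Ici_self
  have hiv : (0:ℝ) ∈ (fun x => fF n μ x - rF α B x) '' Set.Icc x₀ y₀ := by
    apply intermediate_value_Icc' hxy.le hcont
    refine Set.mem_Icc.mpr ⟨?_, ?_⟩
    · show fF n μ y₀ - rF α B y₀ ≤ 0
      linarith
    · show 0 ≤ fF n μ x₀ - rF α B x₀
      linarith
  obtain ⟨γ, hγI, hγeq⟩ := hiv
  have hγa : a < γ := lt_of_lt_of_le hx₀a hγI.1
  have hγfr : fF n μ γ = rF α B γ := by
    have h : fF n μ γ - rF α B γ = 0 := hγeq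
    linarith
  have hg_anti : ∀ x y : ℝ, a < x → x < y →
      fF n μ y - rF α B y < fF n μ x - rF α B x := by
    intro x y hax hxy'
    have h1 := hf_anti x y hax hxy'.le
    have h2 := hr_strict x y (le_trans ha0 hax.le) hxy'
    linarith
  refine ⟨γ, ⟨Set.mem_Ioi.mpr hγa, (key γ hγa).mpr hγfr⟩, ?_⟩
  rintro γ' ⟨hγ'mem, hγ'eq⟩
  have haγ' : a < γ' := Set.mem_Ioi.mp hγ'mem
  have h1 : fF n μ γ' = rF α B γ' := (key γ' haγ').mp hγ'eq
  rcases lt_trichotomy γ' γ with h | h | h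
  · have := hg_anti γ' γ haγ' h
    rw [h1, hγfr] at this
    simp at this
  · exact h
  · have := hg_anti γ γ' hγa h
    rw [h1, hγfr] at this
    simp at this
end
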